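/- Suppose f, G, H, q, q1, q2 are polynomials with G(x,y) and H(z,t) irreducible and non-constant, satisfying the identity q·(1 − u·f) + q1·G + q2·H = 1 in C[x,y,z,t,u]. Then f lies in the ideal (G,H) of C[x,y,z,t], i.e., f is Cartesian. -/

import Mathlib

open MvPolynomial

/-- Embedding of the variables `x, y` into `ℂ[x,y,z,t]`. -/
noncomputable def embXY : MvPolynomial (Fin 2) ℂ →+* MvPolynomial (Fin 4) ℂ :=
  (MvPolynomial.rename (![0, 1] : Fin 2 → Fin 4)).toRingHom

/-- Embedding of the variables `z, t` into `ℂ[x,y,z,t]`. -/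
noncomputable def embZT : MvPolynomial (Fin 2) ℂ →+* MvPolynomial (Fin 4) ℂ :=
  (MvPolynomial.rename (![2, 3] : Fin 2 → Fin 4)).toRingHom

/-- Embedding of `ℂ[x,y,z,t]` into `ℂ[x,y,z,t,u]`. -/
noncomputable def emb5 : MvPolynomial (Fin 4) ℂ →+* MvPolynomial (Fin 5) ℂ :=
  (MvPolynomial.rename (Fin.castSucc : Fin 4 → Fin 5)).toRingHom

namespace CartesianAux

/-- The weak Nullstellensatz consequence we need: a polynomial vanishing on the zero set of a
prime `p` lies in the ideal `(p)`. -/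
lemma NSS (p g : MvPolynomial (Fin 2) ℂ) (hp : Prime p)
    (h : ∀ x : Fin 2 → ℂ, eval x p = 0 → eval x g = 0) : g ∈ Ideal.span {p} := by
  have hprime : (Ideal.span {p} : Ideal (MvPolynomial (Fin 2) ℂ)).IsPrime :=
    (Ideal.span_singleton_prime hp.ne_zero).mpr hp
  have hmem : g ∈ vanishingIdeal ℂ (zeroLocus ℂ (Ideal.span {p})) := by
    intro x hx
    exact h x (hx p (Ideal.subset_span rfl))
  rwa [vanishingIdeal_zeroLocus_eq_radical, hprime.radical] at hmem

lemma primeG0 (G0 : MvPolynomial (Fin 2) ℂ) (h : Irreducible (embXY G0)) : Prime G0 := by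
  have hp : Prime (embXY G0) := (UniqueFactorizationMonoid.irreducible_iff_prime).mp h
  refine ⟨fun h0 => hp.ne_zero (by rw [h0, map_zero]), fun hu => hp.2.1 (hu.map embXY), ?_⟩
  intro a b hab
  set π : MvPolynomial (Fin 4) ℂ →+* MvPolynomial (Fin 2) ℂ :=
    (aeval ![X 0, X 1, 0, 0] : MvPolynomial (Fin 4) ℂ →ₐ[ℂ] MvPolynomial (Fin 2) ℂ).toRingHom
  have hsec : ∀ c : MvPolynomial (Fin 2) ℂ, π (embXY c) = c := by
    intro c
    show aeval _ (rename _ c) = c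
    rw [aeval_rename]
    have : (![X 0, X 1, 0, 0] : Fin 4 → MvPolynomial (Fin 2) ℂ) ∘ ![0, 1] = X := by
      funext i; fin_cases i <;> rfl
    rw [this, aeval_X_left_apply]
  have := hp.2.2 (embXY a) (embXY b) (by rw [← map_mul]; exact map_dvd embXY hab)
  rcases this with ⟨c, hc⟩ | ⟨c, hc⟩
  · left; exact ⟨π c, by rw [← hsec a, hc, map_mul, hsec]⟩
  · right; exact ⟨π c, by rw [← hsec b, hc, map_mul, hsec]⟩

lemma primeH0 (H0 : MvPolynomial (Fin 2) ℂ) (h : Irreducible (embZT H0)) : Prime H0 := by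
  have hp : Prime (embZT H0) := (UniqueFactorizationMonoid.irreducible_iff_prime).mp h
  refine ⟨fun h0 => hp.ne_zero (by rw [h0, map_zero]), fun hu => hp.2.1 (hu.map embZT), ?_⟩
  intro a b hab
  set π : MvPolynomial (Fin 4) ℂ →+* MvPolynomial (Fin 2) ℂ :=
    (aeval ![0, 0, X 0, X 1] : MvPolynomial (Fin 4) ℂ →ₐ[ℂ] MvPolynomial (Fin 2) ℂ).toRingHom
  have hsec : ∀ c : MvPolynomial (Fin 2) ℂ, π (embZT c) = c := by
    intro c
    show aeval _ (rename _ c) = c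
    rw [aeval_rename]
    have : (![0, 0, X 0, X 1] : Fin 4 → MvPolynomial (Fin 2) ℂ) ∘ ![2, 3] = X := by
      funext i; fin_cases i <;> rfl
    rw [this, aeval_X_left_apply]
  have := hp.2.2 (embZT a) (embZT b) (by rw [← map_mul]; exact map_dvd embZT hab)
  rcases this with ⟨c, hc⟩ | ⟨c, hc⟩
  · left; exact ⟨π c, by rw [← hsec a, hc, map_mul, hsec]⟩
  · right; exact ⟨π c, by rw [← hsec b, hc, map_mul, hsec]⟩

/-- Rabinowitsch-style step: the certificate forces `f` to vanish on `V(G) ∩ V(H)`. -/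
lemma stepA (G0 H0 : MvPolynomial (Fin 2) ℂ) (f : MvPolynomial (Fin 4) ℂ)
    (q q1 q2 : MvPolynomial (Fin 5) ℂ)
    (hid : q * (1 - MvPolynomial.X 4 * emb5 f) + q1 * emb5 (embXY G0)
            + q2 * emb5 (embZT H0) = 1) :
    ∀ ab : Fin 4 → ℂ, eval ab (embXY G0) = 0 → eval ab (embZT H0) = 0 → eval ab f = 0 := by
  intro ab hG hH
  by_contra hne
  set c := eval ab f with hc
  set p5 : Fin 5 → ℂ := Fin.snoc ab c⁻¹ with hp5
  have h5 : ∀ g : MvPolynomial (Fin 4) ℂ, eval p5 (emb5 g) = eval ab g := by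
    intro g
    show eval p5 (rename _ g) = _
    rw [eval_rename]
    have : p5 ∘ Fin.castSucc = ab := by
      funext i; simp [hp5, Fin.snoc_castSucc]
    rw [this]
  have := congrArg (eval p5) hid
  rw [map_one, map_add, map_add, map_mul, map_mul, map_mul, map_sub, map_one, map_mul,
    h5, h5, h5, hG, hH, eval_X] at this
  have h4 : p5 4 = c⁻¹ := by
    have : (4 : Fin 5) = Fin.last 4 := rfl
    rw [hp5, this, Fin.snoc_last]
  rw [h4, inv_mul_cancel₀ hne, sub_self, mul_zero, mul_zero, mul_zero] at this
  simp at this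

/-- The key linear-algebra step: if every "ℂ-coordinate" consequence holds, the polynomial with
coefficients in a `ℂ`-algebra `B` lies in the extended ideal `(G0)`. -/
lemma key {B : Type*} [CommRing B] [Algebra ℂ B]
    (G0 : MvPolynomial (Fin 2) ℂ)
    (hG0 : ∀ g : MvPolynomial (Fin 2) ℂ,
      (∀ a : Fin 2 → ℂ, eval a G0 = 0 → eval a g = 0) → g ∈ Ideal.span {G0})
    (P : MvPolynomial (Fin 2) B)
    (hP : ∀ a : Fin 2 → ℂ, eval a G0 = 0 →
      aeval (fun i => algebraMap ℂ B (a i)) P = 0) :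
    P ∈ Ideal.span {MvPolynomial.map (algebraMap ℂ B) G0} := by
  classical
  let b := Module.Basis.ofVectorSpace ℂ B
  let Pc : Module.Basis.ofVectorSpaceIndex ℂ B → MvPolynomial (Fin 2) ℂ := fun i =>
    ∑ m ∈ P.support, monomial m (b.repr (coeff m P) i)
  have hcoeff : ∀ i n, coeff n (Pc i) = b.repr (coeff n P) i := by
    intro i n
    rw [coeff_sum]
    by_cases hn : n ∈ P.support
    · rw [Finset.sum_eq_single n (fun m _ hmn => by rw [coeff_monomial, if_neg hmn])
        (fun h => absurd hn h)]
      rw [coeff_monomial, if_pos rfl]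
    · rw [Finset.sum_eq_zero (fun m hm => by
        rw [coeff_monomial, if_neg (fun h => hn (by rw [← h]; exact hm))])]
      rw [notMem_support_iff.mp hn, map_zero, Finsupp.coe_zero, Pi.zero_apply]
  have heval : ∀ (i) (a : Fin 2 → ℂ),
      eval a (Pc i) = b.repr (aeval (fun j => algebraMap ℂ B (a j)) P) i := by
    intro i a
    have haev : aeval (fun j => algebraMap ℂ B (a j)) P
        = ∑ m ∈ P.support, (∏ j, a j ^ m j) • coeff m P := by
      rw [aeval_def, eval₂_eq']
      refine Finset.sum_congr rfl fun m _ => ?_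
      rw [Algebra.smul_def, map_prod]
      simp only [map_pow]
      rw [Algebra.algebraMap_self, RingHom.id_apply, mul_comm]
    rw [haev]
    have h1 : b.repr (∑ m ∈ P.support, (∏ j, a j ^ m j) • coeff m P) i
        = ∑ m ∈ P.support, (∏ j, a j ^ m j) * b.repr (coeff m P) i := by
      rw [map_sum, Finsupp.coe_finset_sum, Finset.sum_apply]
      refine Finset.sum_congr rfl fun m _ => ?_
      rw [map_smul, Finsupp.coe_smul, Pi.smul_apply, smul_eq_mul]
    rw [h1]
    unfold Pc
    rw [map_sum]
    refine Finset.sum_congr rfl fun m _ => ?_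
    rw [eval_monomial, mul_comm]
    congr 1
    rw [Finsupp.prod_fintype _ _ (fun j => pow_zero (a j))]
  have hPc : ∀ i, Pc i ∈ Ideal.span {G0} := by
    intro i
    refine hG0 _ fun a ha => ?_
    rw [heval, hP a ha, map_zero, Finsupp.coe_zero, Pi.zero_apply]
  set T : Finset (Module.Basis.ofVectorSpaceIndex ℂ B) :=
    P.support.biUnion (fun m => (b.repr (coeff m P)).support) with hT
  have hre : P = ∑ i ∈ T, MvPolynomial.C (b i) * MvPolynomial.map (algebraMap ℂ B) (Pc i) := by
    apply MvPolynomial.ext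
    intro n
    rw [coeff_sum]
    have : ∀ i ∈ T, coeff n (MvPolynomial.C (b i) * MvPolynomial.map (algebraMap ℂ B) (Pc i))
        = b.repr (coeff n P) i • b i := by
      intro i _
      rw [coeff_C_mul, coeff_map, hcoeff, Algebra.smul_def, mul_comm]
    rw [Finset.sum_congr rfl this]
    by_cases hn : n ∈ P.support
    · have hsub : (b.repr (coeff n P)).support ⊆ T := by
        intro i hi; exact Finset.mem_biUnion.mpr ⟨n, hn, hi⟩
      rw [← Finset.sum_subset hsub (fun i _ hi => by
        rw [Finsupp.notMem_support_iff.mp hi, zero_smul])]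
      conv_lhs => rw [← b.linearCombination_repr (coeff n P)]
      rw [Finsupp.linearCombination_apply, Finsupp.sum]
    · rw [notMem_support_iff.mp hn]
      rw [Finset.sum_eq_zero (fun i _ => by simp)]
  rw [hre]
  refine Ideal.sum_mem _ fun i _ => Ideal.mul_mem_left _ _ ?_
  obtain ⟨r, hr⟩ := Ideal.mem_span_singleton'.mp (hPc i)
  rw [← hr, map_mul]
  exact Ideal.mul_mem_left _ _ (Ideal.subset_span rfl)

/-- The splitting isomorphism `ℂ[x,y,z,t] ≃ (ℂ[z,t])[x,y]`. -/
noncomputable def eIso : MvPolynomial (Fin 4) ℂ ≃ₐ[ℂ] MvPolynomial (Fin 2) (MvPolynomial (Fin 2) ℂ) :=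
  (renameEquiv ℂ finSumFinEquiv.symm).trans (sumAlgEquiv ℂ (Fin 2) (Fin 2))

lemma eIso_embXY (G0 : MvPolynomial (Fin 2) ℂ) :
    eIso (embXY G0) = MvPolynomial.map (C : ℂ →+* MvPolynomial (Fin 2) ℂ) G0 := by
  have h1 : ⇑(finSumFinEquiv (m := 2) (n := 2)).symm ∘ (![0, 1] : Fin 2 → Fin (2 + 2))
      = Sum.inl := by
    funext i; fin_cases i <;> rfl
  show (sumAlgEquiv ℂ (Fin 2) (Fin 2)) ((renameEquiv ℂ finSumFinEquiv.symm) (rename ![0, 1] G0)) = _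
  rw [renameEquiv_apply, rename_rename, h1]
  have : ((sumAlgEquiv ℂ (Fin 2) (Fin 2)).toRingHom.comp (rename Sum.inl).toRingHom :
      MvPolynomial (Fin 2) ℂ →+* MvPolynomial (Fin 2) (MvPolynomial (Fin 2) ℂ))
      = (MvPolynomial.map (C : ℂ →+* MvPolynomial (Fin 2) ℂ)) := by
    apply MvPolynomial.ringHom_ext
    · intro c; simp [sumToIter_C]
    · intro i; simp [sumAlgEquiv_X_inl]
  exact RingHom.congr_fun this G0

lemma eIso_embZT (H0 : MvPolynomial (Fin 2) ℂ) :
    eIso (embZT H0) = (C : MvPolynomial (Fin 2) ℂ →+* MvPolynomial (Fin 2) (MvPolynomial (Fin 2) ℂ)) H0 := by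
  have h1 : ⇑(finSumFinEquiv (m := 2) (n := 2)).symm ∘ (![2, 3] : Fin 2 → Fin (2 + 2))
      = Sum.inr := by
    funext i; fin_cases i <;> rfl
  show (sumAlgEquiv ℂ (Fin 2) (Fin 2)) ((renameEquiv ℂ finSumFinEquiv.symm) (rename ![2, 3] H0)) = _
  rw [renameEquiv_apply, rename_rename, h1]
  have : ((sumAlgEquiv ℂ (Fin 2) (Fin 2)).toRingHom.comp (rename Sum.inr).toRingHom :
      MvPolynomial (Fin 2) ℂ →+* MvPolynomial (Fin 2) (MvPolynomial (Fin 2) ℂ))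
      = (C : MvPolynomial (Fin 2) ℂ →+* MvPolynomial (Fin 2) (MvPolynomial (Fin 2) ℂ)).comp
          (RingHom.id _) := by
    apply MvPolynomial.ringHom_ext
    · intro c; simp [sumToIter_C]
    · intro i; simp [sumAlgEquiv_X_inr]
  exact RingHom.congr_fun this H0

lemma eIso_X0 : eIso (X 0) = X 0 := by
  show sumAlgEquiv ℂ (Fin 2) (Fin 2) (rename (⇑finSumFinEquiv.symm) (X 0)) = _
  rw [rename_X]
  have h : finSumFinEquiv.symm (0 : Fin (2 + 2)) = Sum.inl (0 : Fin 2) := rfl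
  rw [h, sumAlgEquiv_X_inl]

lemma eIso_X1 : eIso (X 1) = X 1 := by
  show sumAlgEquiv ℂ (Fin 2) (Fin 2) (rename (⇑finSumFinEquiv.symm) (X 1)) = _
  rw [rename_X]
  have h : finSumFinEquiv.symm (1 : Fin (2 + 2)) = Sum.inl (1 : Fin 2) := rfl
  rw [h, sumAlgEquiv_X_inl]

lemma eIso_X2 : eIso (X 2) = C (X 0) := by
  show sumAlgEquiv ℂ (Fin 2) (Fin 2) (rename (⇑finSumFinEquiv.symm) (X 2)) = _
  rw [rename_X]
  have h : finSumFinEquiv.symm (2 : Fin (2 + 2)) = Sum.inr (0 : Fin 2) := rfl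
  rw [h, sumAlgEquiv_X_inr]

lemma eIso_X3 : eIso (X 3) = C (X 1) := by
  show sumAlgEquiv ℂ (Fin 2) (Fin 2) (rename (⇑finSumFinEquiv.symm) (X 3)) = _
  rw [rename_X]
  have h : finSumFinEquiv.symm (3 : Fin (2 + 2)) = Sum.inr (1 : Fin 2) := rfl
  rw [h, sumAlgEquiv_X_inr]

end CartesianAux

open CartesianAux in
set_option maxHeartbeats 1000000 in
theorem cartesian_of_nullstellensatz_certificate
    (G0 H0 : MvPolynomial (Fin 2) ℂ) (f : MvPolynomial (Fin 4) ℂ)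
    (q q1 q2 : MvPolynomial (Fin 5) ℂ)
    (hGirr : Irreducible (embXY G0)) (hHirr : Irreducible (embZT H0))
    (hGnc : ∀ c : ℂ, G0 ≠ MvPolynomial.C c) (hHnc : ∀ c : ℂ, H0 ≠ MvPolynomial.C c)
    (hid : q * (1 - MvPolynomial.X 4 * emb5 f) + q1 * emb5 (embXY G0)
            + q2 * emb5 (embZT H0) = 1) :
    f ∈ (Ideal.span {embXY G0, embZT H0} : Ideal (MvPolynomial (Fin 4) ℂ)) := by
  classical
  have hGp : Prime G0 := primeG0 G0 hGirr
  have hHp : Prime H0 := primeH0 H0 hHirr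
  have hvan := stepA G0 H0 f q q1 q2 hid
  let J : Ideal (MvPolynomial (Fin 2) ℂ) := Ideal.span {H0}
  -- evaluation compatibility
  have hP : ∀ a : Fin 2 → ℂ, eval a G0 = 0 →
      aeval (fun i => algebraMap ℂ (MvPolynomial (Fin 2) ℂ ⧸ J) (a i))
        (MvPolynomial.map (Ideal.Quotient.mk J) (eIso f)) = 0 := by
    intro a ha
    let φ : MvPolynomial (Fin 4) ℂ →ₐ[ℂ] MvPolynomial (Fin 2) ℂ :=
      aeval ![C (a 0), C (a 1), X 0, X 1]
    have hhom : (((aeval (fun i => algebraMap ℂ (MvPolynomial (Fin 2) ℂ ⧸ J) (a i)) :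
          MvPolynomial (Fin 2) (MvPolynomial (Fin 2) ℂ ⧸ J)
            →ₐ[MvPolynomial (Fin 2) ℂ ⧸ J] (MvPolynomial (Fin 2) ℂ ⧸ J)).restrictScalars ℂ).comp
        ((MvPolynomial.mapAlgHom (Ideal.Quotient.mkₐ ℂ J)).comp eIso.toAlgHom))
        = (Ideal.Quotient.mkₐ ℂ J).comp φ := by
      apply MvPolynomial.algHom_ext
      intro j
      fin_cases j <;>
        simp [φ, eIso_X0, eIso_X1, eIso_X2, eIso_X3,
          Ideal.Quotient.mkₐ_eq_mk, ← MvPolynomial.algebraMap_eq] <;>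
      try simp [IsScalarTower.algebraMap_apply ℂ (MvPolynomial (Fin 2) ℂ)
          (MvPolynomial (Fin 2) ℂ ⧸ J), Ideal.Quotient.algebraMap_eq,
          MvPolynomial.algebraMap_eq]
    have hcomm := AlgHom.congr_fun hhom f
    simp only [AlgHom.comp_apply, AlgHom.coe_restrictScalars, AlgEquiv.toAlgHom_eq_coe,
      AlgHom.coe_coe] at hcomm
    have hmem : φ f ∈ J := by
      refine NSS H0 (φ f) hHp fun bp hbp => ?_
      have hev : eval bp (φ f) = eval ![a 0, a 1, bp 0, bp 1] f := by
        have h2 : ((eval bp : MvPolynomial (Fin 2) ℂ →+* ℂ).comp φ.toRingHom)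
            = (eval ![a 0, a 1, bp 0, bp 1] : MvPolynomial (Fin 4) ℂ →+* ℂ) := by
          apply MvPolynomial.ringHom_ext
          · intro c; simp [φ]
          · intro j; fin_cases j <;> simp [φ]
        exact RingHom.congr_fun h2 f
      rw [hev]
      refine hvan _ ?_ ?_
      · show eval _ (rename _ G0) = 0
        rw [eval_rename]
        have h3 : (![a 0, a 1, bp 0, bp 1] : Fin 4 → ℂ) ∘ ![0, 1] = a := by
          funext i; fin_cases i <;> rfl
        rwa [h3]
      · show eval _ (rename _ H0) = 0
        rw [eval_rename]
        have h3 : (![a 0, a 1, bp 0, bp 1] : Fin 4 → ℂ) ∘ ![2, 3] = bp := by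
          funext i; fin_cases i <;> rfl
        rwa [h3]
    have hz : Ideal.Quotient.mk J (φ f) = 0 := by
      rwa [← RingHom.mem_ker, Ideal.mk_ker]
    have hfin : (AlgHom.restrictScalars ℂ (aeval fun i =>
        (algebraMap ℂ (MvPolynomial (Fin 2) ℂ ⧸ J)) (a i)))
        ((MvPolynomial.mapAlgHom (Ideal.Quotient.mkₐ ℂ J)) (eIso f)) = 0 := by
      exact hcomm.trans (by rw [Ideal.Quotient.mkₐ_eq_mk]; exact hz)
    exact hfin
  have hNSSG : ∀ g : MvPolynomial (Fin 2) ℂ,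
      (∀ a : Fin 2 → ℂ, eval a G0 = 0 → eval a g = 0) → g ∈ Ideal.span {G0} :=
    fun g hg => NSS G0 g hGp hg
  have hPmem := key G0 hNSSG (MvPolynomial.map (Ideal.Quotient.mk J) (eIso f)) hP
  have hgen : MvPolynomial.map (algebraMap ℂ (MvPolynomial (Fin 2) ℂ ⧸ J)) G0
      = MvPolynomial.map (Ideal.Quotient.mk J)
          (MvPolynomial.map (C : ℂ →+* MvPolynomial (Fin 2) ℂ) G0) := by
    rw [MvPolynomial.map_map]
    congr 1
  rw [hgen] at hPmem
  obtain ⟨r, hr⟩ := Ideal.mem_span_singleton'.mp hPmem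
  obtain ⟨r', hr'⟩ := MvPolynomial.map_surjective (Ideal.Quotient.mk J)
    Ideal.Quotient.mk_surjective r
  have hker : eIso f - r' * MvPolynomial.map (C : ℂ →+* MvPolynomial (Fin 2) ℂ) G0
      ∈ RingHom.ker (MvPolynomial.map (Ideal.Quotient.mk J) :
          MvPolynomial (Fin 2) (MvPolynomial (Fin 2) ℂ) →+* _) := by
    rw [RingHom.mem_ker, map_sub, map_mul, hr', hr, sub_self]
  rw [MvPolynomial.ker_map, Ideal.mk_ker] at hker
  have hJspan : Ideal.map (C : MvPolynomial (Fin 2) ℂ →+*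
      MvPolynomial (Fin 2) (MvPolynomial (Fin 2) ℂ)) J
      = Ideal.span {(C H0 : MvPolynomial (Fin 2) (MvPolynomial (Fin 2) ℂ))} := by
    show Ideal.map _ (Ideal.span {H0}) = _
    rw [Ideal.map_span, Set.image_singleton]
  rw [hJspan] at hker
  obtain ⟨s2, hs2⟩ := Ideal.mem_span_singleton'.mp hker
  have hfinal : eIso f = r' * MvPolynomial.map (C : ℂ →+* MvPolynomial (Fin 2) ℂ) G0
      + s2 * C H0 := by
    rw [hs2]; ring
  rw [Ideal.mem_span_pair]
  refine ⟨eIso.symm r', eIso.symm s2, ?_⟩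
  apply eIso.injective
  rw [map_add, map_mul, map_mul, AlgEquiv.apply_symm_apply, AlgEquiv.apply_symm_apply,
    eIso_embXY, eIso_embZT, ← hfinal]

-- axiom check
-- #print axioms cartesian_of_nullstellensatz_certificate
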